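/- Let Δ be a flag Eulerian simplicial complex of dimension 3 with n vertices. Then f_1(Δ) < n²/4 + 3n/2; equivalently, 4·f_1(Δ) < n² + 6n. -/

import Mathlib

/-- A finite abstract simplicial complex on vertex set `Fin n`: a collection of subsets of
`Fin n` (the faces) closed under taking subsets and containing every singleton. -/
structure AbsComplex (n : ℕ) where
  faces : Finset (Finset (Fin n))
  down_closed : ∀ F ∈ faces, ∀ G ⊆ F, G ∈ faces
  singleton_mem : ∀ v : Fin n, ({v} : Finset (Fin n)) ∈ faces

namespace AbsComplex

variable {n : ℕ}

/-- `fNum Δ i` is the number of faces of `Δ` of cardinality `i + 1`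
(i.e. of dimension `i`). -/
def fNum (Δ : AbsComplex n) (i : ℕ) : ℕ :=
  (Δ.faces.filter fun F => F.card = i + 1).card

/-- A missing face of `Δ`: a set which is not a face but all of whose proper subsets
are faces. -/
def IsMissing (Δ : AbsComplex n) (F : Finset (Fin n)) : Prop :=
  F ∉ Δ.faces ∧ ∀ G ⊂ F, G ∈ Δ.faces

/-- `mNum Δ i` is the number of missing faces of `Δ` of cardinality `i + 1`
(i.e. of dimension `i`). -/
noncomputable def mNum (Δ : AbsComplex n) (i : ℕ) : ℕ :=
  {F : Finset (Fin n) | Δ.IsMissing F ∧ F.card = i + 1}.ncard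

/-- The faces of the link of the face `F` in `Δ`: all faces `G` with `G ∩ F = ∅`
and `G ∪ F` a face. -/
def linkFaces (Δ : AbsComplex n) (F : Finset (Fin n)) : Finset (Finset (Fin n)) :=
  Δ.faces.filter fun G => G ∩ F = ∅ ∧ G ∪ F ∈ Δ.faces

/-- The reduced Euler characteristic `χ̃ = −1 + f₀ − f₁ + f₂ − ⋯` of a (downward closed,
nonempty) collection of faces, computed as `∑_F (−1)^{|F|−1}` over all faces `F`
(including the empty face). -/
def reducedEuler (s : Finset (Finset (Fin n))) : ℤ :=
  ∑ F ∈ s, (-1 : ℤ) ^ (F.card + 1)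

/-- `Δ.IsEulerianDim D` says that `Δ` is an Eulerian complex of dimension `D`: every face has
cardinality at most `D + 1`, some face has cardinality `D + 1`, and for every face `F`
(including the empty face) the reduced Euler characteristic of the link of `F` equals
`(−1)^{D − |F|}` (written as `(−1)^{D + |F|}`, which has the same parity). -/
def IsEulerianDim (Δ : AbsComplex n) (D : ℕ) : Prop :=
  (∀ F ∈ Δ.faces, F.card ≤ D + 1) ∧ (∃ F ∈ Δ.faces, F.card = D + 1) ∧
    ∀ F ∈ Δ.faces, reducedEuler (Δ.linkFaces F) = (-1 : ℤ) ^ (D + F.card)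

/-- `Δ` is `j`-neighborly: every `j`-element subset of the vertex set is a face. -/
def Neighborly (Δ : AbsComplex n) (j : ℕ) : Prop :=
  ∀ S : Finset (Fin n), S.card = j → S ∈ Δ.faces

/-- `Δ` is flag: every missing face has cardinality `2`. -/
def Flag (Δ : AbsComplex n) : Prop :=
  ∀ F : Finset (Fin n), Δ.IsMissing F → F.card = 2

end AbsComplex


open Finset

namespace S8
variable {n : ℕ}

lemma pair_eq {α : Type*} [DecidableEq α] {a b c d : α} (hcd : c ≠ d)
    (h : ({a,b} : Finset α) = {c,d}) : (a = c ∧ b = d) ∨ (a = d ∧ b = c) := by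
  have ha : a ∈ ({c,d} : Finset α) := h ▸ (by simp)
  have hb : b ∈ ({c,d} : Finset α) := h ▸ (by simp)
  have hc : c ∈ ({a,b} : Finset α) := h ▸ (by simp)
  have hd : d ∈ ({a,b} : Finset α) := h ▸ (by simp)
  simp only [mem_insert, mem_singleton] at ha hb hc hd
  rcases ha with rfl|rfl <;> rcases hb with rfl|rfl <;> tauto

def nbr (Δ : AbsComplex n) (v : Fin n) : Finset (Fin n) :=
  univ.filter fun u => u ≠ v ∧ ({u, v} : Finset (Fin n)) ∈ Δ.faces

lemma mem_nbr {Δ : AbsComplex n} {v u : Fin n} :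
    u ∈ nbr Δ v ↔ u ≠ v ∧ ({u, v} : Finset (Fin n)) ∈ Δ.faces := by simp [nbr]

lemma nbr_comm {Δ : AbsComplex n} {v u : Fin n} : u ∈ nbr Δ v ↔ v ∈ nbr Δ u := by
  simp only [mem_nbr, Finset.pair_comm u v]
  exact ⟨fun h => ⟨h.1.symm, h.2⟩, fun h => ⟨h.1.symm, h.2⟩⟩

/-- In a flag complex every clique is a face. -/
lemma clique_mem (Δ : AbsComplex n) (hflag : Δ.Flag) (S : Finset (Fin n))
    (h : ∀ x ∈ S, ∀ y ∈ S, x ≠ y → ({x, y} : Finset (Fin n)) ∈ Δ.faces) :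
    S ∈ Δ.faces := by
  by_contra hS
  have hne : (S.powerset.filter fun T => T ∉ Δ.faces).Nonempty :=
    ⟨S, by simp [hS]⟩
  obtain ⟨T, hT, hmin⟩ := Finset.exists_min_image _ Finset.card hne
  simp only [mem_filter, Finset.mem_powerset] at hT
  have hmiss : Δ.IsMissing T := by
    refine ⟨hT.2, fun G hG => ?_⟩
    by_contra hGf
    have : T.card ≤ G.card := hmin G (by simp [Finset.mem_powerset, hGf, hG.1.trans hT.1])
    exact absurd (Finset.card_lt_card hG) (by omega)
  have h2 := hflag T hmiss
  obtain ⟨x, y, hxy, rfl⟩ := Finset.card_eq_two.1 h2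
  exact hT.2 (h x (hT.1 (by simp)) y (hT.1 (by simp)) hxy)

lemma mem_link {Δ : AbsComplex n} {F G : Finset (Fin n)} :
    G ∈ Δ.linkFaces F ↔ G ∈ Δ.faces ∧ G ∩ F = ∅ ∧ G ∪ F ∈ Δ.faces := by
  simp [AbsComplex.linkFaces]

lemma link_down {Δ : AbsComplex n} {F G G' : Finset (Fin n)}
    (hG : G ∈ Δ.linkFaces F) (hsub : G' ⊆ G) : G' ∈ Δ.linkFaces F := by
  rw [mem_link] at hG ⊢
  refine ⟨Δ.down_closed _ hG.1 _ hsub, ?_, Δ.down_closed _ hG.2.2 _ (union_subset_union_left hsub)⟩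
  have := hG.2.1
  rw [← Finset.subset_empty] at this ⊢
  exact (Finset.inter_subset_inter_right hsub).trans this

end S8

namespace S8
variable {n : ℕ}

lemma reducedEuler_eq (s : Finset (Finset (Fin n))) (k : ℕ) (h : ∀ F ∈ s, F.card ≤ k) :
    AbsComplex.reducedEuler s
      = ∑ i ∈ range (k+1), (-1:ℤ)^(i+1) * ((s.filter fun F => F.card = i).card : ℤ) := by
  rw [AbsComplex.reducedEuler,
    ← Finset.sum_fiberwise_of_maps_to (g := Finset.card) (t := range (k+1))
      (fun F hF => mem_range.2 (Nat.lt_succ_of_le (h F hF)))]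
  refine Finset.sum_congr rfl fun i _ => ?_
  rw [Finset.sum_congr rfl (fun F hF => by rw [(mem_filter.1 hF).2] : ∀ F ∈ s.filter (fun F => F.card = i), (-1:ℤ)^(F.card+1) = (-1:ℤ)^(i+1)),
    Finset.sum_const, nsmul_eq_mul, mul_comm]

/-- The link of a triangle has exactly two vertices. -/
lemma ext_card (Δ : AbsComplex n) (hEul : Δ.IsEulerianDim 3) {T : Finset (Fin n)}
    (hT : T ∈ Δ.faces) (hT3 : T.card = 3) :
    (univ.filter fun z => z ∉ T ∧ insert z T ∈ Δ.faces).card = 2 := by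
  have hle : ∀ G ∈ Δ.linkFaces T, G.card ≤ 1 := by
    intro G hG
    rw [mem_link] at hG
    have hdisj : Disjoint G T := Finset.disjoint_iff_inter_eq_empty.2 hG.2.1
    have h4 := hEul.1 _ hG.2.2
    rw [Finset.card_union_of_disjoint hdisj, hT3] at h4
    omega
  have hEuler : AbsComplex.reducedEuler (Δ.linkFaces T) = 1 := by
    have := hEul.2.2 T hT
    rw [this, hT3]; norm_num
  rw [reducedEuler_eq _ 1 hle] at hEuler
  have hc0 : (Δ.linkFaces T).filter (fun F => F.card = 0) = {∅} := by
    ext F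
    simp only [mem_filter, Finset.card_eq_zero, mem_singleton]
    constructor
    · exact fun h => h.2
    · rintro rfl
      refine ⟨mem_link.2 ⟨Δ.down_closed _ hT _ (Finset.empty_subset _), by simp, by simpa⟩, rfl⟩
  have hc1 : ((Δ.linkFaces T).filter (fun F => F.card = 1))
      = (univ.filter fun z => z ∉ T ∧ insert z T ∈ Δ.faces).image (fun z => ({z} : Finset (Fin n))) := by
    ext F
    simp only [mem_filter, Finset.card_eq_one, Finset.mem_image, mem_univ, true_and]
    constructor
    · rintro ⟨hF, z, rfl⟩
      rw [mem_link] at hF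
      refine ⟨z, ⟨?_, ?_⟩, rfl⟩
      · intro hz
        have : z ∈ ({z} : Finset (Fin n)) ∩ T := by simp [hz]
        rw [hF.2.1] at this; simp at this
      · have h' : ({z} : Finset (Fin n)) ∪ T = insert z T := by ext a; simp
        rw [← h']; exact hF.2.2
    · rintro ⟨z, ⟨hz, hzT⟩, rfl⟩
      refine ⟨mem_link.2 ⟨Δ.singleton_mem z, ?_, ?_⟩, z, rfl⟩
      · rw [Finset.singleton_inter_of_notMem hz]
      · have h' : ({z} : Finset (Fin n)) ∪ T = insert z T := by ext a; simp
        rw [h']; exact hzT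
  have himg : (((Δ.linkFaces T).filter (fun F => F.card = 1))).card
      = (univ.filter fun z => z ∉ T ∧ insert z T ∈ Δ.faces).card := by
    rw [hc1]
    exact Finset.card_image_of_injective _ (fun a b h => by simpa using h)
  rw [Finset.sum_range_succ, Finset.sum_range_succ] at hEuler
  rw [hc0] at hEuler
  simp only [Finset.card_singleton, Finset.sum_range_zero] at hEuler
  rw [himg] at hEuler
  norm_num at hEuler
  omega

end S8

namespace S8
variable {n : ℕ}

lemma three_c3 (Δ : AbsComplex n) (hEul : Δ.IsEulerianDim 3) (v : Fin n) :
    3 * ((Δ.linkFaces {v}).filter fun F => F.card = 3).card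
      = 2 * ((Δ.linkFaces {v}).filter fun F => F.card = 2).card := by
  set L := Δ.linkFaces {v} with hL
  set W : Finset (Finset (Fin n) × Finset (Fin n)) :=
    ((L.filter fun F => F.card = 3) ×ˢ (L.filter fun F => F.card = 2)).filter
      (fun q => q.2 ⊆ q.1) with hW
  have hWmem : ∀ q : Finset (Fin n) × Finset (Fin n), q ∈ W ↔
      (q.1 ∈ L ∧ q.1.card = 3) ∧ (q.2 ∈ L ∧ q.2.card = 2) ∧ q.2 ⊆ q.1 := by
    intro q
    simp only [hW, mem_filter, Finset.mem_product]
    tauto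
  have count1 : W.card = 3 * ((L.filter fun F => F.card = 3)).card := by
    rw [Finset.card_eq_sum_card_fiberwise (f := Prod.fst) (t := L.filter fun F => F.card = 3)
      (fun q hq => by rw [Finset.mem_coe, hWmem] at hq; exact Finset.mem_coe.2 (mem_filter.2 ⟨hq.1.1, hq.1.2⟩))]
    rw [Finset.sum_congr rfl (fun T hT => ?_), Finset.sum_const, smul_eq_mul, mul_comm]
    have hT' := mem_filter.1 hT
    have : (W.filter fun q => q.1 = T) = (T.powersetCard 2).image (fun e => (T, e)) := by
      ext q
      simp only [mem_filter, Finset.mem_image, Finset.mem_powersetCard, hWmem]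
      constructor
      · rintro ⟨⟨h1, h2, h3⟩, h4⟩
        exact ⟨q.2, ⟨h4 ▸ h3, h2.2⟩, by rw [← h4]⟩
      · rintro ⟨e, ⟨he1, he2⟩, rfl⟩
        exact ⟨⟨⟨hT'.1, hT'.2⟩, ⟨link_down hT'.1 he1, he2⟩, he1⟩, rfl⟩
    rw [this, Finset.card_image_of_injective _ (fun a b h => by simpa using h),
      Finset.card_powersetCard, hT'.2]
    decide
  have count2 : W.card = 2 * ((L.filter fun F => F.card = 2)).card := by
    rw [Finset.card_eq_sum_card_fiberwise (f := Prod.snd) (t := L.filter fun F => F.card = 2)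
      (fun q hq => by rw [Finset.mem_coe, hWmem] at hq; exact Finset.mem_coe.2 (mem_filter.2 ⟨hq.2.1.1, hq.2.1.2⟩))]
    rw [Finset.sum_congr rfl (fun e he => ?_), Finset.sum_const, smul_eq_mul, mul_comm]
    have he' := mem_filter.1 he
    have hveL := mem_link.1 he'.1
    have hvnot : v ∉ e := by
      intro hv
      have : v ∈ e ∩ ({v} : Finset (Fin n)) := by simp [hv]
      rw [hveL.2.1] at this; simp at this
    have hins : insert v e ∈ Δ.faces := by
      have : e ∪ ({v} : Finset (Fin n)) = insert v e := by ext a; simp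
      rw [← this]; exact hveL.2.2
    have hins3 : (insert v e).card = 3 := by
      rw [Finset.card_insert_of_notMem hvnot, he'.2]
    have hext := ext_card Δ hEul hins hins3
    have himg : (W.filter fun q => q.2 = e)
        = (univ.filter fun z => z ∉ insert v e ∧ insert z (insert v e) ∈ Δ.faces).image
          (fun z => (insert z e, e)) := by
      ext q
      simp only [mem_filter, Finset.mem_image, mem_univ, true_and, hWmem]
      constructor
      · rintro ⟨⟨⟨hT1, hT3⟩, _, hsub⟩, h4⟩
        obtain ⟨z, hz⟩ : ∃ z, q.1 \ e = {z} := by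
          rw [← Finset.card_eq_one, Finset.card_sdiff_of_subset (h4 ▸ hsub), hT3, he'.2]
        have hzT : z ∈ q.1 ∧ z ∉ e := by
          have : z ∈ q.1 \ e := hz ▸ by simp
          exact ⟨(Finset.mem_sdiff.1 this).1, (Finset.mem_sdiff.1 this).2⟩
        have hq1 : q.1 = insert z e := by
          ext a
          simp only [Finset.mem_insert]
          constructor
          · intro ha
            by_cases hae : a ∈ e
            · exact Or.inr hae
            · have : a ∈ q.1 \ e := Finset.mem_sdiff.2 ⟨ha, hae⟩
              rw [hz] at this; simp at this; exact Or.inl this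
          · rintro (rfl | ha)
            · exact hzT.1
            · exact hsub (h4.symm ▸ ha)
        have hTL := mem_link.1 hT1
        have hvT : v ∉ q.1 := by
          intro hv
          have : v ∈ q.1 ∩ ({v} : Finset (Fin n)) := by simp [hv]
          rw [hTL.2.1] at this; simp at this
        refine ⟨z, ⟨?_, ?_⟩, ?_⟩
        · simp only [Finset.mem_insert]
          rintro (rfl | hc)
          · exact hvT hzT.1
          · exact hzT.2 hc
        · have : insert z (insert v e) = q.1 ∪ ({v} : Finset (Fin n)) := by
            ext a; simp [hq1]
          rw [this]; exact hTL.2.2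
        · rw [← hq1, ← h4]
      · rintro ⟨z, ⟨hz1, hz2⟩, rfl⟩
        simp only [Finset.mem_insert, not_or] at hz1
        have hsub1 : insert z e ⊆ insert z (insert v e) := by
          intro a ha
          simp only [Finset.mem_insert] at ha ⊢
          tauto
        have hT1 : insert z e ∈ Δ.faces := Δ.down_closed _ hz2 _ hsub1
        have hT3 : (insert z e).card = 3 := by
          rw [Finset.card_insert_of_notMem hz1.2, he'.2]
        refine ⟨⟨⟨mem_link.2 ⟨hT1, ?_, ?_⟩, hT3⟩, ⟨he'.1, he'.2⟩, Finset.subset_insert _ _⟩, rfl⟩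
        · ext a
          simp only [Finset.mem_inter, Finset.mem_insert, Finset.mem_singleton,
            Finset.notMem_empty, iff_false]
          rintro ⟨ha1, rfl⟩
          rcases ha1 with rfl | ha
          · exact hz1.1 rfl
          · exact hvnot ha
        · have : insert z e ∪ ({v} : Finset (Fin n)) = insert z (insert v e) := by
            ext a; simp
          rw [this]; exact hz2
    rw [himg, Finset.card_image_of_injOn, hext]
    intro a ha b hb hab
    simp only [Finset.mem_coe, mem_filter, mem_univ, true_and, Finset.mem_insert, not_or] at ha hb
    have h1 : insert a e = insert b e := (Prod.ext_iff.1 hab).1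
    have h2 : a ∈ insert b e := h1 ▸ Finset.mem_insert_self a e
    rcases Finset.mem_insert.1 h2 with rfl | hc
    · rfl
    · exact absurd hc ha.1.2
  omega

end S8

namespace S8
variable {n : ℕ}

lemma c2_eq (Δ : AbsComplex n) (hEul : Δ.IsEulerianDim 3) (v : Fin n) :
    ((Δ.linkFaces {v}).filter fun F => F.card = 2).card + 6 = 3 * (nbr Δ v).card := by
  set L := Δ.linkFaces {v} with hL
  have hv : ({v} : Finset (Fin n)) ∈ Δ.faces := Δ.singleton_mem v
  have hEuler : AbsComplex.reducedEuler L = 1 := by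
    have := hEul.2.2 _ hv
    rw [this, Finset.card_singleton]; norm_num
  have hle : ∀ G ∈ L, G.card ≤ 3 := by
    intro G hG
    have hG' := mem_link.1 hG
    have hdisj : Disjoint G ({v} : Finset (Fin n)) :=
      Finset.disjoint_iff_inter_eq_empty.2 hG'.2.1
    have h4 := hEul.1 _ hG'.2.2
    rw [Finset.card_union_of_disjoint hdisj, Finset.card_singleton] at h4
    omega
  rw [reducedEuler_eq _ 3 hle] at hEuler
  have hc0 : L.filter (fun F => F.card = 0) = {∅} := by
    ext F
    simp only [mem_filter, Finset.card_eq_zero, mem_singleton]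
    constructor
    · exact fun h => h.2
    · rintro rfl
      exact ⟨mem_link.2 ⟨Δ.down_closed _ hv _ (Finset.empty_subset _), by simp, by simpa⟩, rfl⟩
  have hc1 : (L.filter (fun F => F.card = 1)).card = (nbr Δ v).card := by
    have himg : L.filter (fun F => F.card = 1) = (nbr Δ v).image (fun u => ({u} : Finset (Fin n))) := by
      ext F
      simp only [mem_filter, Finset.card_eq_one, Finset.mem_image]
      constructor
      · rintro ⟨hF, u, rfl⟩
        have hF' := mem_link.1 hF
        refine ⟨u, mem_nbr.2 ⟨?_, ?_⟩, rfl⟩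
        · rintro rfl
          have : u ∈ ({u} : Finset (Fin n)) ∩ {u} := by simp
          rw [hF'.2.1] at this; simp at this
        · have : ({u} : Finset (Fin n)) ∪ {v} = {u, v} := by ext a; simp
          rw [← this]; exact hF'.2.2
      · rintro ⟨u, hu, rfl⟩
        obtain ⟨hu1, hu2⟩ := mem_nbr.1 hu
        refine ⟨mem_link.2 ⟨Δ.singleton_mem u, ?_, ?_⟩, u, rfl⟩
        · rw [Finset.singleton_inter_of_notMem (by simpa using hu1)]
        · have : ({u} : Finset (Fin n)) ∪ {v} = {u, v} := by ext a; simp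
          rw [this]; exact hu2
    rw [himg, Finset.card_image_of_injective _ (fun a b h => by simpa using h)]
  have h33 := three_c3 Δ hEul v
  rw [← hL] at h33
  rw [Finset.sum_range_succ, Finset.sum_range_succ, Finset.sum_range_succ,
    Finset.sum_range_succ, Finset.sum_range_zero, hc0] at hEuler
  simp only [Finset.card_singleton] at hEuler
  rw [hc1] at hEuler
  norm_num at hEuler
  omega

end S8

namespace S8
variable {n : ℕ}

lemma filter_pair_eq (C : Fin n × Fin n → Prop) [DecidablePred C] {a b : Fin n} (hab : a ≠ b)
    (hmem : ∀ p : Fin n × Fin n, ({p.1, p.2} : Finset (Fin n)) = {a, b} → C p) :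
    (univ.filter fun p : Fin n × Fin n => C p ∧ ({p.1, p.2} : Finset (Fin n)) = {a, b})
      = {(a, b), (b, a)} := by
  ext p
  simp only [mem_filter, mem_univ, true_and, Finset.mem_insert, Finset.mem_singleton]
  constructor
  · rintro ⟨hC, heq⟩
    rcases pair_eq hab heq with ⟨h1, h2⟩ | ⟨h1, h2⟩
    · exact Or.inl (Prod.ext h1 h2)
    · exact Or.inr (Prod.ext h1 h2)
  · rintro (rfl | rfl)
    · exact ⟨hmem _ rfl, rfl⟩
    · exact ⟨hmem _ (Finset.pair_comm _ _), Finset.pair_comm _ _⟩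

lemma card_filter_pair (C : Fin n × Fin n → Prop) [DecidablePred C] {a b : Fin n} (hab : a ≠ b)
    (hmem : ∀ p : Fin n × Fin n, ({p.1, p.2} : Finset (Fin n)) = {a, b} → C p) :
    (univ.filter fun p : Fin n × Fin n => C p ∧ ({p.1, p.2} : Finset (Fin n)) = {a, b}).card
      = 2 := by
  rw [filter_pair_eq C hab hmem, Finset.card_insert_of_notMem (by simp [Prod.ext_iff, hab]),
    Finset.card_singleton]

lemma ne_of_pair_eq {p : Fin n × Fin n} {a b : Fin n} (hab : a ≠ b)
    (h : ({p.1, p.2} : Finset (Fin n)) = {a, b}) : p.1 ≠ p.2 := by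
  intro hpe
  have h2 : ({a, b} : Finset (Fin n)).card = 2 := by
    rw [Finset.card_insert_of_notMem (by simpa using hab), Finset.card_singleton]
  rw [← h, hpe] at h2
  simp at h2

lemma pairs_card (Δ : AbsComplex n) (hEul : Δ.IsEulerianDim 3) (hflag : Δ.Flag) (v : Fin n) :
    (univ.filter fun p : Fin n × Fin n => p.1 ∈ nbr Δ v ∧ p.2 ∈ nbr Δ v ∧ p.1 ≠ p.2
        ∧ ({p.1, p.2} : Finset (Fin n)) ∈ Δ.faces).card
      = 2 * ((Δ.linkFaces {v}).filter fun F => F.card = 2).card := by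
  rw [Finset.card_eq_sum_card_fiberwise
    (f := fun p : Fin n × Fin n => ({p.1, p.2} : Finset (Fin n)))
    (t := (Δ.linkFaces {v}).filter fun F => F.card = 2) ?_]
  · rw [Finset.sum_congr rfl (fun F hF => ?_), Finset.sum_const, smul_eq_mul, mul_comm]
    obtain ⟨hFL, hF2⟩ := mem_filter.1 hF
    obtain ⟨a, b, hab, rfl⟩ := Finset.card_eq_two.1 hF2
    have hFf := (mem_link.1 hFL).1
    have hFd := (mem_link.1 hFL).2.1
    have hFu := (mem_link.1 hFL).2.2
    have hnv : ∀ x ∈ ({a, b} : Finset (Fin n)), x ∈ nbr Δ v := by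
      intro x hx
      refine mem_nbr.2 ⟨?_, ?_⟩
      · rintro rfl
        have : x ∈ ({a, b} : Finset (Fin n)) ∩ {x} := by simp [hx]
        rw [hFd] at this; simp at this
      · refine Δ.down_closed _ hFu _ ?_
        intro y hy
        simp only [Finset.mem_insert, Finset.mem_singleton] at hy
        rcases hy with rfl | rfl
        · exact Finset.mem_union_left _ hx
        · exact Finset.mem_union_right _ (by simp)
    rw [Finset.filter_filter]
    exact card_filter_pair _ hab (fun p hp => by
      rcases pair_eq hab hp with ⟨h1, h2⟩ | ⟨h1, h2⟩ <;>
        refine ⟨by rw [h1]; exact hnv _ (by simp), by rw [h2]; exact hnv _ (by simp),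
          ne_of_pair_eq hab hp, by rw [hp]; exact hFf⟩)
  · intro p hp
    simp only [Finset.mem_coe, mem_filter, mem_univ, true_and] at hp
    obtain ⟨hp1, hp2, hpne, hpf⟩ := hp
    refine mem_filter.2 ⟨mem_link.2 ⟨hpf, ?_, ?_⟩, ?_⟩
    · ext a
      simp only [Finset.mem_inter, Finset.mem_insert, Finset.mem_singleton,
        Finset.notMem_empty, iff_false]
      rintro ⟨ha, rfl⟩
      rcases ha with rfl | rfl
      · exact (mem_nbr.1 hp1).1 rfl
      · exact (mem_nbr.1 hp2).1 rfl
    · have hcl : ({p.1, p.2} : Finset (Fin n)) ∪ {v} = {p.1, p.2, v} := by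
        ext x; simp only [Finset.mem_union, Finset.mem_insert, Finset.mem_singleton]; tauto
      rw [hcl]
      refine clique_mem Δ hflag _ ?_
      intro x hx y hy hxy
      simp only [Finset.mem_insert, Finset.mem_singleton] at hx hy
      have e1 := (mem_nbr.1 hp1).2
      have e2 := (mem_nbr.1 hp2).2
      rcases hx with rfl | rfl | rfl <;> rcases hy with rfl | rfl | rfl <;>
        first
          | exact absurd rfl hxy
          | exact hpf
          | exact e1
          | exact e2
          | (rw [Finset.pair_comm]; first | exact hpf | exact e1 | exact e2)
    · rw [Finset.card_insert_of_notMem (by simpa using hpne), Finset.card_singleton]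

lemma handshake (Δ : AbsComplex n) : ∑ v, (nbr Δ v).card = 2 * Δ.fNum 1 := by
  have h1 : ∑ v, (nbr Δ v).card = (univ.filter fun p : Fin n × Fin n => p.2 ∈ nbr Δ p.1).card := by
    rw [Finset.card_filter, Fintype.sum_prod_type]
    refine Finset.sum_congr rfl fun v _ => ?_
    rw [← Finset.card_filter]
    congr 1
    ext u; simp
  have hmaps : ∀ p ∈ (univ.filter fun p : Fin n × Fin n => p.2 ∈ nbr Δ p.1),
      ({p.1, p.2} : Finset (Fin n)) ∈ Δ.faces.filter fun F => F.card = 2 := by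
    intro p hp
    simp only [mem_filter, mem_univ, true_and] at hp
    obtain ⟨hne, hpf⟩ := mem_nbr.1 hp
    refine mem_filter.2 ⟨by rwa [Finset.pair_comm], ?_⟩
    rw [Finset.card_insert_of_notMem (by simpa using hne.symm), Finset.card_singleton]
  rw [h1, Finset.card_eq_sum_card_fiberwise
    (f := fun p : Fin n × Fin n => ({p.1, p.2} : Finset (Fin n))) hmaps]
  have hfib : ∀ F ∈ Δ.faces.filter fun F => F.card = 2,
      ((univ.filter fun p : Fin n × Fin n => p.2 ∈ nbr Δ p.1).filter
        (fun p => ({p.1, p.2} : Finset (Fin n)) = F)).card = 2 := by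
    intro F hF
    obtain ⟨hFf, hF2⟩ := mem_filter.1 hF
    obtain ⟨a, b, hab, rfl⟩ := Finset.card_eq_two.1 hF2
    rw [Finset.filter_filter]
    refine card_filter_pair _ hab (fun p hp => ?_)
    rcases pair_eq hab hp with ⟨h1, h2⟩ | ⟨h1, h2⟩
    · show p.2 ∈ nbr Δ p.1
      rw [h1, h2]
      exact mem_nbr.2 ⟨hab.symm, by rw [Finset.pair_comm]; exact hFf⟩
    · show p.2 ∈ nbr Δ p.1
      rw [h1, h2]
      exact mem_nbr.2 ⟨hab, hFf⟩
  rw [Finset.sum_congr rfl hfib, Finset.sum_const, smul_eq_mul, mul_comm]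
  congr 1

end S8

namespace S8
variable {n : ℕ}

set_option maxHeartbeats 1600000 in
theorem final (Δ : AbsComplex n) (hEul : Δ.IsEulerianDim 3) (hflag : Δ.Flag) :
    4 * Δ.fNum 1 < n ^ 2 + 6 * n := by
  classical
  obtain ⟨F4, hF4f, hF4c⟩ := hEul.2.1
  have hn1 : 1 ≤ n := by
    obtain ⟨x, -⟩ := Finset.card_pos.1 (show 0 < F4.card by rw [hF4c]; norm_num)
    exact x.pos
  set d : Fin n → ℕ := fun v => (nbr Δ v).card with hd
  set B : Fin n → Finset (Fin n × Fin n) := fun v =>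
    univ.filter fun p : Fin n × Fin n => p.1 ∈ nbr Δ v ∧ p.2 ∈ nbr Δ v ∧ p.1 ≠ p.2
      ∧ ({p.1, p.2} : Finset (Fin n)) ∉ Δ.faces with hB
  set m : Fin n → ℕ := fun x =>
    (univ.filter fun y => x ≠ y ∧ ({x, y} : Finset (Fin n)) ∉ Δ.faces).card with hmdef
  -- Step 1 : per-vertex count of nonedges among neighbours
  have key1 : ∀ v, (B v).card + 7 * d v = d v * d v + 12 := by
    intro v
    set Sv := univ.filter (fun p : Fin n × Fin n =>
      p.1 ∈ nbr Δ v ∧ p.2 ∈ nbr Δ v ∧ p.1 ≠ p.2) with hSv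
    have hA : (Sv.filter fun p => ({p.1, p.2} : Finset (Fin n)) ∈ Δ.faces).card + 12
        = 6 * d v := by
      have heq : Sv.filter (fun p => ({p.1, p.2} : Finset (Fin n)) ∈ Δ.faces)
          = univ.filter fun p : Fin n × Fin n => p.1 ∈ nbr Δ v ∧ p.2 ∈ nbr Δ v ∧ p.1 ≠ p.2
            ∧ ({p.1, p.2} : Finset (Fin n)) ∈ Δ.faces := by
        rw [hSv, Finset.filter_filter]
        apply Finset.filter_congr
        intro p _
        tauto
      rw [heq, pairs_card Δ hEul hflag v]
      have h6 := c2_eq Δ hEul v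
      have hdv : d v = (nbr Δ v).card := rfl
      omega
    have hBv : B v = Sv.filter fun p => ({p.1, p.2} : Finset (Fin n)) ∉ Δ.faces := by
      rw [hSv, Finset.filter_filter]
      apply Finset.filter_congr
      intro p _
      tauto
    have hsplit := Finset.card_filter_add_card_filter_not (s := Sv)
      (p := fun p => ({p.1, p.2} : Finset (Fin n)) ∈ Δ.faces)
    have hSveq : Sv = (nbr Δ v).offDiag := by
      ext p
      rw [hSv, Finset.mem_offDiag]
      simp only [mem_filter, mem_univ, true_and]
    have hdd : d v ≤ d v * d v := by
      rcases Nat.eq_zero_or_pos (d v) with h | h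
      · simp [h]
      · exact Nat.le_mul_of_pos_left _ h
    have hSvcard : Sv.card + d v = d v * d v := by
      rw [hSveq, Finset.offDiag_card]
      exact Nat.sub_add_cancel hdd
    rw [hBv]
    generalize hq : d v * d v = q at hSvcard ⊢
    omega
  -- Step 2 : global double count
  have key2 : ∑ v, (B v).card = ∑ x, ∑ y,
      (if x ≠ y ∧ ({x, y} : Finset (Fin n)) ∉ Δ.faces
        then (nbr Δ x ∩ nbr Δ y).card else 0) := by
    have hcard : ∀ v, (B v).card = ∑ x, ∑ y,
        (if x ∈ nbr Δ v ∧ y ∈ nbr Δ v ∧ x ≠ y ∧ ({x, y} : Finset (Fin n)) ∉ Δ.faces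
          then 1 else 0) := by
      intro v
      rw [hB]
      rw [Finset.card_filter, Fintype.sum_prod_type]
    rw [Finset.sum_congr rfl (fun v _ => hcard v), Finset.sum_comm]
    refine Finset.sum_congr rfl fun x _ => ?_
    rw [Finset.sum_comm]
    refine Finset.sum_congr rfl fun y _ => ?_
    by_cases h : x ≠ y ∧ ({x, y} : Finset (Fin n)) ∉ Δ.faces
    · rw [if_pos h]
      have hiff : ∀ v : Fin n,
          (x ∈ nbr Δ v ∧ y ∈ nbr Δ v ∧ x ≠ y ∧ ({x, y} : Finset (Fin n)) ∉ Δ.faces)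
            ↔ v ∈ nbr Δ x ∩ nbr Δ y := by
        intro v
        rw [Finset.mem_inter]
        constructor
        · rintro ⟨h1, h2, -, -⟩
          exact ⟨nbr_comm.1 h1, nbr_comm.1 h2⟩
        · rintro ⟨h1, h2⟩
          exact ⟨nbr_comm.2 h1, nbr_comm.2 h2, h.1, h.2⟩
      rw [Finset.sum_congr rfl fun v _ => if_congr (hiff v) rfl rfl, ← Finset.card_filter]
      congr 1
      ext v
      simp
    · rw [if_neg h]
      exact Finset.sum_eq_zero fun v _ => if_neg (by tauto)
  -- Step 3 : bound by degrees
  have key3 : 2 * ∑ v, (B v).card ≤ ∑ x, ∑ y,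
      (if x ≠ y ∧ ({x, y} : Finset (Fin n)) ∉ Δ.faces then d x + d y else 0) := by
    rw [key2, Finset.mul_sum]
    refine Finset.sum_le_sum fun x _ => ?_
    rw [Finset.mul_sum]
    refine Finset.sum_le_sum fun y _ => ?_
    by_cases h : x ≠ y ∧ ({x, y} : Finset (Fin n)) ∉ Δ.faces
    · rw [if_pos h, if_pos h]
      have h1 := Finset.card_le_card (Finset.inter_subset_left (s₁ := nbr Δ x) (s₂ := nbr Δ y))
      have h2 := Finset.card_le_card (Finset.inter_subset_right (s₁ := nbr Δ x) (s₂ := nbr Δ y))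
      simp only [hd]
      omega
    · rw [if_neg h, if_neg h]
      simp
  -- Step 4 : compute RHS
  have key4 : ∑ x, ∑ y,
      (if x ≠ y ∧ ({x, y} : Finset (Fin n)) ∉ Δ.faces then d x + d y else 0)
      = 2 * ∑ x, d x * m x := by
    have hsplitsum : ∀ x y, (if x ≠ y ∧ ({x, y} : Finset (Fin n)) ∉ Δ.faces then d x + d y else 0)
        = (if x ≠ y ∧ ({x, y} : Finset (Fin n)) ∉ Δ.faces then d x else 0)
          + (if x ≠ y ∧ ({x, y} : Finset (Fin n)) ∉ Δ.faces then d y else 0) := by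
      intro x y
      split_ifs <;> simp
    have part1 : ∑ x, ∑ y,
        (if x ≠ y ∧ ({x, y} : Finset (Fin n)) ∉ Δ.faces then d x else 0)
        = ∑ x, d x * m x := by
      refine Finset.sum_congr rfl fun x _ => ?_
      rw [Finset.sum_ite, Finset.sum_const_zero, add_zero, Finset.sum_const, smul_eq_mul,
        mul_comm, hmdef]
    have part2 : ∑ x, ∑ y,
        (if x ≠ y ∧ ({x, y} : Finset (Fin n)) ∉ Δ.faces then d y else 0)
        = ∑ x, d x * m x := by
      rw [Finset.sum_comm]
      refine Finset.sum_congr rfl fun y _ => ?_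
      rw [Finset.sum_ite, Finset.sum_const_zero, add_zero, Finset.sum_const, smul_eq_mul,
        mul_comm]
      congr 1
      rw [hmdef]
      congr 1
      ext z
      simp only [mem_filter, mem_univ, true_and]
      rw [Finset.pair_comm z y, ne_comm]
    calc ∑ x, ∑ y, (if x ≠ y ∧ ({x, y} : Finset (Fin n)) ∉ Δ.faces then d x + d y else 0)
        = (∑ x, ∑ y, (if x ≠ y ∧ ({x, y} : Finset (Fin n)) ∉ Δ.faces then d x else 0))
          + ∑ x, ∑ y, (if x ≠ y ∧ ({x, y} : Finset (Fin n)) ∉ Δ.faces then d y else 0) := by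
          rw [← Finset.sum_add_distrib]
          refine Finset.sum_congr rfl fun x _ => ?_
          rw [← Finset.sum_add_distrib]
          exact Finset.sum_congr rfl fun y _ => hsplitsum x y
      _ = 2 * ∑ x, d x * m x := by rw [part1, part2]; ring
  -- Step 5 : count of non-neighbours
  have hm : ∀ x, m x + d x + 1 = n := by
    intro x
    have e1 : (univ.filter fun y : Fin n => x ≠ y).card = n - 1 := by
      rw [Finset.filter_ne, Finset.card_erase_of_mem (mem_univ x), Finset.card_univ,
        Fintype.card_fin]
    have hsplit := Finset.card_filter_add_card_filter_not
      (s := univ.filter fun y : Fin n => x ≠ y)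
      (p := fun y => ({x, y} : Finset (Fin n)) ∈ Δ.faces)
    have e2 : (univ.filter fun y : Fin n => x ≠ y).filter
        (fun y => ({x, y} : Finset (Fin n)) ∈ Δ.faces) = nbr Δ x := by
      rw [Finset.filter_filter]
      ext y
      simp only [mem_filter, mem_univ, true_and, mem_nbr]
      constructor
      · rintro ⟨h1, h2⟩
        exact ⟨h1.symm, by rwa [Finset.pair_comm]⟩
      · rintro ⟨h1, h2⟩
        exact ⟨h1.symm, by rwa [Finset.pair_comm]⟩
    have e3 : (univ.filter fun y : Fin n => x ≠ y).filter
        (fun y => ¬({x, y} : Finset (Fin n)) ∈ Δ.faces)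
        = univ.filter fun y => x ≠ y ∧ ({x, y} : Finset (Fin n)) ∉ Δ.faces := by
      rw [Finset.filter_filter]
    rw [e2, e3, e1] at hsplit
    have hmx : m x = (univ.filter fun y => x ≠ y ∧ ({x, y} : Finset (Fin n)) ∉ Δ.faces).card := rfl
    have hdx : d x = (nbr Δ x).card := rfl
    omega
  -- Step 6 : put everything together over ℤ
  have hsum1 : ∑ v, ((B v).card + 7 * d v) = ∑ v, (d v * d v + 12) :=
    Finset.sum_congr rfl fun v _ => key1 v
  rw [Finset.sum_add_distrib, Finset.sum_add_distrib, ← Finset.mul_sum, Finset.sum_const,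
    Finset.card_univ, Fintype.card_fin, smul_eq_mul] at hsum1
  have hBle : ∑ v, (B v).card ≤ ∑ x, d x * m x := by
    have h23 : 2 * ∑ v, (B v).card ≤ 2 * ∑ x, d x * m x := by rw [← key4]; exact key3
    omega
  have hhs := handshake Δ
  -- cast to ℤ
  have hZ1 : ((∑ v, (B v).card : ℕ) : ℤ) + 7 * ∑ v, (d v : ℤ)
      = (∑ v, (d v : ℤ) * (d v : ℤ)) + 12 * n := by
    push_cast at hsum1 ⊢
    linarith [hsum1]
  have hZ2 : ((∑ x, d x * m x : ℕ) : ℤ)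
      = (n - 1) * (∑ v, (d v : ℤ)) - ∑ v, (d v : ℤ) * (d v : ℤ) := by
    push_cast
    have hterm : ∀ x : Fin n, (d x : ℤ) * (m x : ℤ)
        = ((n : ℤ) - 1) * (d x : ℤ) - (d x : ℤ) * (d x : ℤ) := by
      intro x
      have hxZ : ((m x : ℤ)) + d x + 1 = n := by exact_mod_cast hm x
      have h' : (m x : ℤ) = (n : ℤ) - 1 - d x := by linarith
      rw [h']
      ring
    rw [Finset.sum_congr rfl fun x _ => hterm x, Finset.sum_sub_distrib, ← Finset.mul_sum]
  have hCS := Finset.sum_mul_sq_le_sq_mul_sq univ (fun _ : Fin n => (1 : ℤ))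
    (fun v => (d v : ℤ))
  simp only [one_mul, one_pow, Finset.sum_const, Finset.card_univ, Fintype.card_fin,
    nsmul_eq_mul, smul_eq_mul, mul_one] at hCS
  have hCS' : (∑ v, (d v : ℤ)) ^ 2 ≤ n * ∑ v, (d v : ℤ) * (d v : ℤ) := by
    have : ∑ v, ((d v : ℤ)) ^ 2 = ∑ v, (d v : ℤ) * (d v : ℤ) :=
      Finset.sum_congr rfl fun v _ => sq ((d v : ℤ)) ▸ by ring
    calc (∑ v, (d v : ℤ)) ^ 2 ≤ (n : ℤ) * ∑ v, ((d v : ℤ)) ^ 2 := hCS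
      _ = n * ∑ v, (d v : ℤ) * (d v : ℤ) := by rw [this]
  have hD : ((∑ v, d v : ℕ) : ℤ) = ∑ v, (d v : ℤ) := by push_cast; rfl
  have hhs' : ∑ v, d v = 2 * Δ.fNum 1 := hhs
  have hhsZ : (∑ v, (d v : ℤ)) = 2 * (Δ.fNum 1 : ℤ) := by
    rw [← hD]
    exact_mod_cast hhs'
  by_contra hcon
  push_neg at hcon
  have hconZ : (n : ℤ) ^ 2 + 6 * n ≤ 4 * (Δ.fNum 1 : ℤ) := by exact_mod_cast hcon
  have hBleZ : ((∑ v, (B v).card : ℕ) : ℤ) ≤ (n - 1) * (∑ v, (d v : ℤ))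
      - ∑ v, (d v : ℤ) * (d v : ℤ) := by
    rw [← hZ2]
    exact_mod_cast hBle
  set D := ∑ v, (d v : ℤ) with hDdef
  set Q := ∑ v, (d v : ℤ) * (d v : ℤ) with hQdef
  have hBnn : (0 : ℤ) ≤ ((∑ v, (B v).card : ℕ) : ℤ) := Int.natCast_nonneg _
  have hDnn : (0 : ℤ) ≤ D := by
    rw [hDdef]
    exact Finset.sum_nonneg fun v _ => Int.natCast_nonneg _
  have hkey : 2 * Q + 12 * n ≤ (n + 6) * D := by linarith
  have hbig : (n : ℤ) * (n + 6) ≤ 2 * D := by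
    rw [hhsZ] at *
    nlinarith [hconZ]
  have hnZ : (1 : ℤ) ≤ n := by exact_mod_cast hn1
  nlinarith [mul_le_mul_of_nonneg_left hkey (by linarith : (0:ℤ) ≤ (n:ℤ)),
    mul_le_mul_of_nonneg_left hbig hDnn, hCS', sq_nonneg D]

end S8


/-- A flag Eulerian complex `Δ` of dimension `3` with `n` vertices satisfies
`4·f_1(Δ) < n² + 6n` (i.e. `f_1 < n²/4 + 3n/2`). -/
theorem statement8 {n : ℕ} (Δ : AbsComplex n) (hEul : Δ.IsEulerianDim 3) (hflag : Δ.Flag) :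
    4 * Δ.fNum 1 < n ^ 2 + 6 * n :=
  S8.final Δ hEul hflag
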